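/- Every deterministic counter with threshold n and failure ratio φ < 1/2 has at least (1 − 2φ)·n states. Here a counter with threshold n and failure ratio φ is a DFA A over the unary alphabet {a} such that for every m ≥ n, the number of indices i ∈ [0,m] for which the equivalence (aⁱ ∈ L(A) ⟺ i ≥ n) fails is at most φ·(m+1). -/
import Mathlib


/-- Every deterministic counter with threshold `n` and failure ratio
`φ < 1/2` has at least `(1 − 2φ)·n` states. -/
theorem counter_lower_bound {σ : Type*} [Fintype σ]
    (A : DFA Unit σ) (n : ℕ) (φ : ℝ) (hφ0 : 0 ≤ φ) (hφ : φ < 1 / 2)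
    (hcnt : ∀ m : ℕ, n ≤ m →
      ({i : ℕ | i ≤ m ∧
          ¬((List.replicate i () ∈ A.accepts) ↔ n ≤ i)}.ncard : ℝ) ≤
        φ * (m + 1)) :
    (1 - 2 * φ) * n ≤ Fintype.card σ := by
  classical
  set K := Fintype.card σ with hK
  set s : ℕ → σ := fun i => A.eval (List.replicate i ()) with hs
  -- step lemma
  have hstep : ∀ t, s (t + 1) = A.step (s t) () := by
    intro t
    simp [hs, List.replicate_succ', DFA.eval, DFA.evalFrom]
  -- pigeonhole: find a < b ≤ K with s a = s b
  have hnotinj : ¬ Function.Injective (fun i : Fin (K + 1) => s i.val) := by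
    intro h
    have := Fintype.card_le_of_injective _ h
    simp [hK] at this
  rw [Function.not_injective_iff] at hnotinj
  obtain ⟨u, v, huv, hne⟩ := hnotinj
  obtain ⟨a, b, hab, hbK, hsab⟩ : ∃ a b : ℕ, a < b ∧ b ≤ K ∧ s a = s b := by
    rcases lt_or_gt_of_ne (Fin.val_ne_of_ne hne) with h | h
    · exact ⟨u.val, v.val, h, Nat.lt_succ_iff.mp v.isLt, huv⟩
    · exact ⟨v.val, u.val, h, Nat.lt_succ_iff.mp u.isLt, huv.symm⟩
  set p := b - a with hp
  have hp1 : 1 ≤ p := by omega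
  have hapb : a + p = b := by omega
  -- periodicity
  have hshift : ∀ e, s (a + e + p) = s (a + e) := by
    intro e
    induction e with
    | zero => simpa [hapb] using hsab.symm
    | succ e ih =>
      have h1 : a + (e + 1) + p = (a + e + p) + 1 := by ring
      have h2 : a + (e + 1) = (a + e) + 1 := by ring
      rw [h1, h2, hstep, hstep, ih]
  have hmul : ∀ c e, s (a + e + c * p) = s (a + e) := by
    intro c
    induction c with
    | zero => simp
    | succ c ih =>
      intro e
      have h1 : a + e + (c + 1) * p = a + (e + c * p) + p := by ring
      rw [h1, hshift]
      have h2 : a + (e + c * p) = a + e + c * p := by ring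
      rw [h2, ih]
  -- main case split
  by_cases han : n ≤ a
  · -- trivial: K ≥ a + p > a ≥ n
    have hKn : (n : ℝ) ≤ K := by
      have : n ≤ K := by omega
      exact_mod_cast this
    nlinarith [Nat.cast_nonneg (α := ℝ) n]
  push_neg at han
  set d := n - a with hd
  have hd1 : 1 ≤ d := by omega
  have hnad : n = a + d := by omega
  set c := (d - 1) / p + 1 with hc
  set q := c * p with hqdef
  have hq : d ≤ q ∧ q + 1 ≤ d + p := by
    obtain ⟨X, M, h1, h2, h3⟩ : ∃ X M, X + M = d - 1 ∧ M < p ∧ q = X + p :=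
      ⟨p * ((d - 1) / p), (d - 1) % p, Nat.div_add_mod _ _, Nat.mod_lt _ hp1,
        by rw [hqdef, hc]; ring⟩
    omega
  obtain ⟨hq1, hq2⟩ := hq
  have hper : ∀ x, a ≤ x → s (x + q) = s x := by
    intro x hx
    obtain ⟨e, rfl⟩ : ∃ e, x = a + e := ⟨x - a, by omega⟩
    rw [hqdef]
    exact hmul c e
  set m := n + q - 1 with hm
  have hnm : n ≤ m := by omega
  have hm1 : m + 1 = n + q := by omega
  set S : Set ℕ := {i : ℕ | i ≤ m ∧
      ¬((List.replicate i () ∈ A.accepts) ↔ n ≤ i)} with hS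
  have hSfin : S.Finite := (Set.finite_Iic m).subset (fun x hx => hx.1)
  have hacc : ∀ x, (List.replicate x () ∈ A.accepts ↔ s x ∈ A.accept) :=
    fun x => A.mem_accepts
  set f : ℕ → ℕ := fun x => if List.replicate x () ∈ A.accepts then x else x + q
    with hf
  have hmem : ∀ x ∈ Set.Ico a n, f x ∈ S := by
    intro x hx
    obtain ⟨hax, hxn⟩ := hx
    by_cases hA : List.replicate x () ∈ A.accepts
    · refine ⟨?_, ?_⟩
      · simp only [hf, if_pos hA]; omega
      · simp only [hf, if_pos hA]
        intro h
        exact absurd (h.mp hA) (by omega)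
    · have haq : ¬ (List.replicate (x + q) () ∈ A.accepts) := by
        rw [hacc, hper x hax]
        rw [hacc] at hA
        exact hA
      refine ⟨?_, ?_⟩
      · simp only [hf, if_neg hA]; omega
      · simp only [hf, if_neg hA]
        intro h
        exact haq (h.mpr (by omega))
  have hinj : Set.InjOn f (Set.Ico a n) := by
    intro x hx y hy hxy
    obtain ⟨hax, hxn⟩ := hx
    obtain ⟨hay, hyn⟩ := hy
    simp only [hf] at hxy
    by_cases h1 : List.replicate x () ∈ A.accepts
    · by_cases h2 : List.replicate y () ∈ A.accepts
      · rw [if_pos h1, if_pos h2] at hxy; omega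
      · rw [if_pos h1, if_neg h2] at hxy; omega
    · by_cases h2 : List.replicate y () ∈ A.accepts
      · rw [if_neg h1, if_pos h2] at hxy; omega
      · rw [if_neg h1, if_neg h2] at hxy; omega
  have hcard : d ≤ S.ncard := by
    have h1 : (Set.Ico a n).ncard = n - a := by
      rw [← Finset.coe_Ico, Set.ncard_coe_finset, Nat.card_Ico]
    calc d = (Set.Ico a n).ncard := by omega
      _ = (f '' Set.Ico a n).ncard := (Set.ncard_image_of_injOn hinj).symm
      _ ≤ S.ncard :=
        Set.ncard_le_ncard (by rintro _ ⟨x, hx, rfl⟩; exact hmem x hx) hSfin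
  have hreal : (d : ℝ) ≤ φ * (m + 1) :=
    le_trans (by exact_mod_cast hcard) (hcnt m hnm)
  have hm1R : ((m : ℝ) + 1) = (n : ℝ) + q := by exact_mod_cast hm1
  rw [hm1R] at hreal
  have hKR : (a : ℝ) + p ≤ K := by exact_mod_cast (by omega : a + p ≤ K)
  have hq2R : (q : ℝ) + 1 ≤ (d : ℝ) + p := by exact_mod_cast hq2
  have hnadR : (n : ℝ) = (a : ℝ) + d := by exact_mod_cast hnad
  rw [hnadR] at hreal ⊢
  have hφq : φ * ((q : ℝ) + 1) ≤ φ * ((d : ℝ) + p) :=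
    mul_le_mul_of_nonneg_left hq2R hφ0
  have h1 : 0 ≤ φ * (a : ℝ) := mul_nonneg hφ0 (Nat.cast_nonneg a)
  have h2 : 0 ≤ (1 - φ) * (p : ℝ) :=
    mul_nonneg (by linarith) (Nat.cast_nonneg p)
  nlinarith [hreal, hφq, hKR, h1, h2]
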